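/- Let A and B be N×T real matrices, let (α^A, γ^A) solve the h-weighted normal equations for A, and let (α^B, γ^B) solve the h-weighted normal equations for B. Then 𝒜ᵀ H̄^{-1} ℬ = (NT)^{-3/2} · Σ_{i,t} (α^A_i + γ^A_t)·B_{it} = (NT)^{-3/2} · Σ_{i,t} (α^B_i + γ^B_t)·A_{it}. -/

import Mathlib

open Matrix

/-- The penalized expected incidental-parameter Hessian
`H̄ = (NT)^{-1/2}·(M + b·v vᵀ)` with `v = (1_N', −1_T')'`. -/
noncomputable def Hbar {N T : ℕ} (w : Fin N → Fin T → ℝ) (b : ℝ) :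
    Matrix (Fin N ⊕ Fin T) (Fin N ⊕ Fin T) ℝ :=
  (Real.sqrt ((N : ℝ) * T))⁻¹ •
    (Matrix.fromBlocks (Matrix.diagonal fun i => ∑ t, w i t) (Matrix.of fun i t => w i t)
        (Matrix.of fun t i => w i t) (Matrix.diagonal fun t => ∑ i, w i t)
      + b • Matrix.vecMulVec (Sum.elim (fun _ => (1 : ℝ)) fun _ => -1)
          (Sum.elim (fun _ => (1 : ℝ)) fun _ => -1))

/-- The vector `𝒳 = (NT)^{-1}·(X 1_T ; Xᵀ 1_N)` associated to an `N×T` matrix `X`. -/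
noncomputable def scoreVec {N T : ℕ} (X : Matrix (Fin N) (Fin T) ℝ) :
    Fin N ⊕ Fin T → ℝ :=
  ((N : ℝ) * T)⁻¹ • Sum.elim (fun i => ∑ t, X i t) fun t => ∑ i, X i t

lemma Hbar_mulVec_key {N T : ℕ} (hN : 0 < N) (hT : 0 < T)
    (w : Fin N → Fin T → ℝ) (b : ℝ)
    (X : Matrix (Fin N) (Fin T) ℝ) (α : Fin N → ℝ) (γ : Fin T → ℝ)
    (h1 : ∀ i, ∑ t, w i t * (α i + γ t) = ∑ t, X i t)
    (h2 : ∀ t, ∑ i, w i t * (α i + γ t) = ∑ i, X i t) :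
    ∃ u : Fin N ⊕ Fin T → ℝ,
      (∀ i t, u (Sum.inl i) + u (Sum.inr t) = α i + γ t) ∧
      (Hbar w b).mulVec u = Real.sqrt ((N : ℝ) * T) • scoreVec X := by
  set c : ℝ := (∑ i, α i - ∑ t, γ t) / (N + T) with hc
  refine ⟨Sum.elim (fun i => α i - c) (fun t => γ t + c),
    fun i t => by simp only [Sum.elim_inl, Sum.elim_inr]; ring, ?_⟩
  have hNT : (0:ℝ) < (N : ℝ) * T := by positivity
  have hs : Real.sqrt ((N:ℝ)*T) * Real.sqrt ((N:ℝ)*T) = (N:ℝ)*T :=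
    Real.mul_self_sqrt hNT.le
  have hcc : c * ((N:ℝ) + T) = ∑ i, α i - ∑ t, γ t := by
    rw [hc]; field_simp
  have key : (Matrix.fromBlocks (Matrix.diagonal fun i => ∑ t, w i t)
        (Matrix.of fun i t => w i t) (Matrix.of fun t i => w i t)
        (Matrix.diagonal fun t => ∑ i, w i t)
      + b • Matrix.vecMulVec (Sum.elim (fun _ => (1 : ℝ)) fun _ => -1)
          (Sum.elim (fun _ => (1 : ℝ)) fun _ => -1)).mulVec
        (Sum.elim (fun i => α i - c) (fun t => γ t + c))
      = Sum.elim (fun i => ∑ t, X i t) (fun t => ∑ i, X i t) := by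
    have hv : ((Matrix.vecMulVec (Sum.elim (fun _ => (1 : ℝ)) fun _ => -1)
          (Sum.elim (fun _ => (1 : ℝ)) fun _ => -1)) :
          Matrix (Fin N ⊕ Fin T) (Fin N ⊕ Fin T) ℝ).mulVec
          (Sum.elim (fun i => α i - c) (fun t => γ t + c)) = 0 := by
      funext y
      simp only [Matrix.mulVec, Matrix.vecMulVec_apply, dotProduct,
        Fintype.sum_sum_type, Sum.elim_inl, Sum.elim_inr, Pi.zero_apply]
      have hne : ((N:ℝ) + T) ≠ 0 := by positivity
      have h01 : ((N:ℝ)+T) * ((N:ℝ)+T)⁻¹ = 1 := mul_inv_cancel₀ hne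
      cases y <;>
        simp only [Sum.elim_inl, Sum.elim_inr, one_mul, neg_one_mul, neg_mul,
          Finset.sum_sub_distrib, Finset.sum_add_distrib, Finset.sum_const,
          Finset.card_univ, Fintype.card_fin, nsmul_eq_mul, Finset.sum_neg_distrib, hc]
      · linear_combination ((∑ t, γ t) - (∑ i, α i)) * h01
      · linear_combination ((∑ i, α i) - (∑ t, γ t)) * h01
    rw [Matrix.add_mulVec, Matrix.smul_mulVec, hv, smul_zero, add_zero]
    funext x
    cases x with
    | inl i =>
      simp only [Matrix.mulVec, dotProduct, Fintype.sum_sum_type, Sum.elim_inl, Sum.elim_inr,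
        Matrix.fromBlocks_apply₁₁, Matrix.fromBlocks_apply₁₂, Matrix.diagonal_apply,
        Matrix.of_apply]
      simp only [ite_mul, zero_mul, Finset.sum_ite_eq, Finset.mem_univ, if_true]
      rw [← h1 i, Finset.sum_mul, ← Finset.sum_add_distrib]
      exact Finset.sum_congr rfl fun t _ => by ring
    | inr t =>
      simp only [Matrix.mulVec, dotProduct, Fintype.sum_sum_type, Sum.elim_inl, Sum.elim_inr,
        Matrix.fromBlocks_apply₂₁, Matrix.fromBlocks_apply₂₂, Matrix.diagonal_apply,
        Matrix.of_apply]
      simp only [ite_mul, zero_mul, Finset.sum_ite_eq, Finset.mem_univ, if_true]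
      rw [← h2 t, Finset.sum_mul, ← Finset.sum_add_distrib]
      exact Finset.sum_congr rfl fun i _ => by ring
  rw [Hbar, Matrix.smul_mulVec, key]
  funext x
  simp only [scoreVec, Pi.smul_apply, smul_eq_mul]
  rw [← hs]
  field_simp
  rw [Real.sqrt_sq (Real.sqrt_nonneg _)]

lemma dot_score {N T : ℕ} (A : Matrix (Fin N) (Fin T) ℝ) (u : Fin N ⊕ Fin T → ℝ)
    (α : Fin N → ℝ) (γ : Fin T → ℝ)
    (hu : ∀ i t, u (Sum.inl i) + u (Sum.inr t) = α i + γ t) :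
    u ⬝ᵥ scoreVec A = ((N : ℝ) * T)⁻¹ * ∑ i, ∑ t, (α i + γ t) * A i t := by
  have key : (∑ i, u (Sum.inl i) * ∑ t, A i t) + (∑ t, u (Sum.inr t) * ∑ i, A i t)
      = ∑ i, ∑ t, (α i + γ t) * A i t := by
    simp only [Finset.mul_sum]
    have h2 : ∑ t, ∑ i, u (Sum.inr t) * A i t = ∑ i, ∑ t, u (Sum.inr t) * A i t :=
      Finset.sum_comm
    rw [h2, ← Finset.sum_add_distrib]
    refine Finset.sum_congr rfl fun i _ => ?_
    rw [← Finset.sum_add_distrib]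
    refine Finset.sum_congr rfl fun t _ => ?_
    rw [← hu i t]; ring
  simp only [dotProduct, scoreVec, Pi.smul_apply, smul_eq_mul, Fintype.sum_sum_type,
    Sum.elim_inl, Sum.elim_inr]
  rw [← key, mul_add, Finset.mul_sum, Finset.mul_sum]
  congr 1 <;> exact Finset.sum_congr rfl fun x _ => by ring

lemma Hbar_symm {N T : ℕ} (w : Fin N → Fin T → ℝ) (b : ℝ) :
    (Hbar w b)ᵀ = Hbar w b := by
  have hv : (Matrix.vecMulVec (Sum.elim (fun _ => (1:ℝ)) fun _ => -1)
      (Sum.elim (fun _ => (1:ℝ)) fun _ => -1) :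
      Matrix (Fin N ⊕ Fin T) (Fin N ⊕ Fin T) ℝ)ᵀ
      = Matrix.vecMulVec (Sum.elim (fun _ => (1:ℝ)) fun _ => -1)
          (Sum.elim (fun _ => (1:ℝ)) fun _ => -1) := by
    ext x y; simp [Matrix.vecMulVec_apply, mul_comm]
  rw [Hbar, Matrix.transpose_smul, Matrix.transpose_add, Matrix.fromBlocks_transpose,
    Matrix.diagonal_transpose, Matrix.diagonal_transpose, Matrix.transpose_smul, hv]
  rfl

/-- If `(α^A, γ^A)` and `(α^B, γ^B)` solve the `h`-weighted normal equations for `A` and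
`B`, then `𝒜ᵀ H̄⁻¹ ℬ = (NT)^{-3/2}·Σ_{i,t}(α^A_i + γ^A_t)·B_{it}
= (NT)^{-3/2}·Σ_{i,t}(α^B_i + γ^B_t)·A_{it}`. -/
theorem projection_formula_dotProduct {N T : ℕ} (hN : 0 < N) (hT : 0 < T)
    (w : Fin N → Fin T → ℝ) (hw : ∀ i t, 0 < w i t) (b : ℝ) (hb : 0 < b)
    (hH : IsUnit (Hbar w b))
    (A B : Matrix (Fin N) (Fin T) ℝ)
    (αA : Fin N → ℝ) (γA : Fin T → ℝ)
    (hA1 : ∀ i, ∑ t, w i t * (αA i + γA t) = ∑ t, A i t)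
    (hA2 : ∀ t, ∑ i, w i t * (αA i + γA t) = ∑ i, A i t)
    (αB : Fin N → ℝ) (γB : Fin T → ℝ)
    (hB1 : ∀ i, ∑ t, w i t * (αB i + γB t) = ∑ t, B i t)
    (hB2 : ∀ t, ∑ i, w i t * (αB i + γB t) = ∑ i, B i t) :
    scoreVec A ⬝ᵥ (Hbar w b)⁻¹.mulVec (scoreVec B)
        = (Real.sqrt ((N : ℝ) * T) ^ 3)⁻¹ * ∑ i, ∑ t, (αA i + γA t) * B i t ∧
      scoreVec A ⬝ᵥ (Hbar w b)⁻¹.mulVec (scoreVec B)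
        = (Real.sqrt ((N : ℝ) * T) ^ 3)⁻¹ * ∑ i, ∑ t, (αB i + γB t) * A i t := by
  obtain ⟨uA, huA, hA⟩ := Hbar_mulVec_key hN hT w b A αA γA hA1 hA2
  obtain ⟨uB, huB, hB⟩ := Hbar_mulVec_key hN hT w b B αB γB hB1 hB2
  have hNT : (0:ℝ) < (N:ℝ)*T := by positivity
  have hspos : 0 < Real.sqrt ((N:ℝ)*T) := Real.sqrt_pos.2 hNT
  have hs0 : Real.sqrt ((N:ℝ)*T) ≠ 0 := ne_of_gt hspos
  have hsq : Real.sqrt ((N:ℝ)*T) * Real.sqrt ((N:ℝ)*T) = (N:ℝ)*T := Real.mul_self_sqrt hNT.le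
  have hdet : IsUnit (Hbar w b).det := (Matrix.isUnit_iff_isUnit_det _).1 hH
  have hinv : (Hbar w b)⁻¹ * Hbar w b = 1 := Matrix.nonsing_inv_mul _ hdet
  have hfac : (Real.sqrt ((N:ℝ)*T) ^ 3)⁻¹
      = (Real.sqrt ((N:ℝ)*T))⁻¹ * ((N:ℝ)*T)⁻¹ := by
    rw [pow_succ, sq, hsq, mul_inv, mul_comm]
  have keyinv : ∀ (X : Matrix (Fin N) (Fin T) ℝ) (u : Fin N ⊕ Fin T → ℝ),
      (Hbar w b).mulVec u = Real.sqrt ((N:ℝ)*T) • scoreVec X →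
      (Hbar w b)⁻¹.mulVec (scoreVec X) = (Real.sqrt ((N:ℝ)*T))⁻¹ • u := by
    intro X u hX
    have h1 : scoreVec X = (Real.sqrt ((N:ℝ)*T))⁻¹ • (Hbar w b).mulVec u := by
      rw [hX, smul_smul, inv_mul_cancel₀ hs0, one_smul]
    rw [h1, Matrix.mulVec_smul, Matrix.mulVec_mulVec, hinv, Matrix.one_mulVec]
  have invA := keyinv A uA hA
  have invB := keyinv B uB hB
  have hsyminv : ((Hbar w b)⁻¹)ᵀ = (Hbar w b)⁻¹ := by
    rw [Matrix.transpose_nonsing_inv, Hbar_symm]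
  constructor
  · rw [Matrix.dotProduct_mulVec, ← Matrix.mulVec_transpose, hsyminv, invA,
      smul_dotProduct, dot_score B uA αA γA huA, hfac, smul_eq_mul, mul_assoc]
  · rw [invB, dotProduct_smul, dotProduct_comm, dot_score A uB αB γB huB,
      hfac, smul_eq_mul, mul_assoc]
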